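/- Sufficient descent of BPGD: if f is L-smooth relative to φ on C and x⁺_τ = argmin_{u∈C} τ⟨∇f(x), u−x⟩ + D_φ(u,x) for τ ∈ (0, 1/L], then f(x⁺_τ) ≤ f(x) − D_φ(x, x⁺_τ)/τ. -/

import Mathlib

open scoped RealInnerProductSpace

noncomputable def breg {n : ℕ} (h : EuclideanSpace ℝ (Fin n) → ℝ)
    (h' : EuclideanSpace ℝ (Fin n) → EuclideanSpace ℝ (Fin n))
    (x y : EuclideanSpace ℝ (Fin n)) : ℝ :=
  h x - h y - ⟪h' y, x - y⟫

-- gradient inequality for convex functions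
lemma grad_ineq {n : ℕ} {C : Set (EuclideanSpace ℝ (Fin n))} (hC : Convex ℝ C)
    {g : EuclideanSpace ℝ (Fin n) → ℝ} {g' z : EuclideanSpace ℝ (Fin n)}
    (hz : z ∈ interior C) (hg : HasGradientAt g g' z)
    (hgc : ConvexOn ℝ C g) {u : EuclideanSpace ℝ (Fin n)} (hu : u ∈ C) :
    ⟪g', u - z⟫ ≤ g u - g z := by
  have hzC : z ∈ C := interior_subset hz
  set d := u - z with hd
  have hcurve : ∀ t ∈ Set.Ioc (0:ℝ) 1, g (z + t • d) ≤ g z + t * (g u - g z) := by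
    intro t ht
    have h1 : z + t • d = (1 - t) • z + t • u := by
      rw [hd]; module
    have := hgc.2 hzC hu (by linarith [ht.2] : (0:ℝ) ≤ 1 - t) ht.1.le (by ring)
    rw [h1]
    calc g ((1-t) • z + t • u) ≤ (1-t) * g z + t * g u := this
    _ = g z + t * (g u - g z) := by ring
  have hcd : HasDerivAt (fun t : ℝ => g (z + t • d)) ⟪g', d⟫ 0 := by
    have h1 : HasDerivAt (fun t : ℝ => z + t • d) d 0 := by
      simpa using ((hasDerivAt_id (0:ℝ)).smul_const d).const_add z
    have h2 : HasDerivAt (fun t : ℝ => g (z + t • d))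
        ((InnerProductSpace.toDual ℝ _ g') d) 0 := by
      apply HasFDerivAt.comp_hasDerivAt _ _ h1
      simpa using hg.hasFDerivAt
    simpa [InnerProductSpace.toDual_apply_apply] using h2
  have hsl : Filter.Tendsto (slope (fun t : ℝ => g (z + t • d)) 0) (nhdsWithin 0 (Set.Ioi 0))
      (nhds ⟪g', d⟫) := by
    have := hasDerivAt_iff_tendsto_slope.1 hcd
    exact this.mono_left (nhdsWithin_mono 0 (fun t ht => ne_of_gt ht))
  have hev : ∀ᶠ t in nhdsWithin (0:ℝ) (Set.Ioi 0),
      slope (fun t : ℝ => g (z + t • d)) 0 t ≤ g u - g z := by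
    have h1 : Set.Ioc (0:ℝ) 1 ∈ nhdsWithin (0:ℝ) (Set.Ioi 0) := by
      rw [mem_nhdsWithin]
      exact ⟨Set.Iio 1, isOpen_Iio, by norm_num, fun t ht => ⟨ht.2, ht.1.le⟩⟩
    filter_upwards [h1] with t ht
    have := hcurve t ht
    rw [slope_def_field]
    simp only [sub_zero, zero_smul, add_zero]
    rw [div_le_iff₀ ht.1]
    linarith
  exact le_of_tendsto hsl hev

theorem bpgd_sufficient_descent {n : ℕ}
    (C : Set (EuclideanSpace ℝ (Fin n))) (hCcl : IsClosed C) (hC : Convex ℝ C)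
    (f φ : EuclideanSpace ℝ (Fin n) → ℝ)
    (f' φ' : EuclideanSpace ℝ (Fin n) → EuclideanSpace ℝ (Fin n))
    (hf : ∀ z ∈ interior C, HasGradientAt f (f' z) z)
    (hφ : ∀ z ∈ interior C, HasGradientAt φ (φ' z) z)
    (hfc : ConvexOn ℝ C f) (hφc : StrictConvexOn ℝ C φ)
    (L : ℝ) (hL : 0 < L)
    (hsmooth : ∀ u ∈ C, ∀ v ∈ interior C, breg f f' u v ≤ L * breg φ φ' u v)
    (x : EuclideanSpace ℝ (Fin n)) (hx : x ∈ interior C)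
    (τ : ℝ) (hτ0 : 0 < τ) (hτL : τ ≤ 1 / L)
    (xp : EuclideanSpace ℝ (Fin n)) (hxp : xp ∈ interior C)
    (hxpmin : IsMinOn (fun u => τ * ⟪f' x, u - x⟫ + breg φ φ' u x) C xp)
    (hxpuniq : ∀ z ∈ C,
      IsMinOn (fun u => τ * ⟪f' x, u - x⟫ + breg φ φ' u x) C z → z = xp) :
    f xp ≤ f x - breg φ φ' x xp / τ := by
  have hxC : x ∈ C := interior_subset hx
  have hxpC : xp ∈ C := interior_subset hxp
  -- stationarity
  have hloc : IsLocalMin (fun u => τ * ⟪f' x, u - x⟫ + breg φ φ' u x) xp :=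
    hxpmin.isLocalMin (mem_interior_iff_mem_nhds.1 hxp)
  set F : EuclideanSpace ℝ (Fin n) →L[ℝ] ℝ :=
    τ • innerSL ℝ (f' x) + (InnerProductSpace.toDual ℝ _ (φ' xp) - innerSL ℝ (φ' x)) with hF
  have hFd : HasFDerivAt (fun u => τ * ⟪f' x, u - x⟫ + breg φ φ' u x) F xp := by
    have h1 : HasFDerivAt (fun u : EuclideanSpace ℝ (Fin n) => τ * ⟪f' x, u - x⟫)
        (τ • innerSL ℝ (f' x)) xp := by
      have : HasFDerivAt (fun u : EuclideanSpace ℝ (Fin n) => ⟪f' x, u - x⟫)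
          (innerSL ℝ (f' x)) xp := by
        have h := (innerSL ℝ (f' x)).hasFDerivAt (x := xp)
        have h' := h.sub_const ⟪f' x, x⟫
        simpa [inner_sub_right] using h'
      simpa using this.const_mul τ
    have h2 : HasFDerivAt (fun u => breg φ φ' u x)
        (InnerProductSpace.toDual ℝ _ (φ' xp) - innerSL ℝ (φ' x)) xp := by
      have hφd := (hφ xp hxp).hasFDerivAt
      have h3 : HasFDerivAt (fun u : EuclideanSpace ℝ (Fin n) => ⟪φ' x, u - x⟫)
          (innerSL ℝ (φ' x)) xp := by
        have h := (innerSL ℝ (φ' x)).hasFDerivAt (x := xp)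
        have h' := h.sub_const ⟪φ' x, x⟫
        simpa [inner_sub_right] using h'
      have := (hφd.sub_const (φ x)).sub h3
      exact this
    exact h1.add h2
  have hF0 : F = 0 := hloc.hasFDerivAt_eq_zero hFd
  have hstat : ∀ w : EuclideanSpace ℝ (Fin n),
      τ * ⟪f' x, w⟫ + ⟪φ' xp, w⟫ - ⟪φ' x, w⟫ = 0 := by
    intro w
    have := congrFun (congrArg (fun (T : EuclideanSpace ℝ (Fin n) →L[ℝ] ℝ) => (T : _ → ℝ)) hF0) w
    simpa [hF, InnerProductSpace.toDual_apply_apply, smul_eq_mul, add_sub_assoc] using this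
  -- three point / identities
  have hkey : τ * ⟪f' x, xp - x⟫ = -(breg φ φ' x xp + breg φ φ' xp x) := by
    have h := hstat (xp - x)
    simp only [breg, inner_sub_right] at h ⊢
    linarith
  -- smoothness at (xp, x)
  have hsm := hsmooth xp hxpC x hx
  -- nonnegativity of breg φ φ' xp x
  have hnn : 0 ≤ breg φ φ' xp x := by
    have := grad_ineq hC hx (hφ x hx) hφc.convexOn hxpC
    simp only [breg]
    linarith
  have hLτ : L * breg φ φ' xp x ≤ (1 / τ) * breg φ φ' xp x := by
    apply mul_le_mul_of_nonneg_right _ hnn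
    rw [le_div_iff₀ hτ0]
    rw [le_div_iff₀ hL] at hτL
    linarith
  -- combine
  have hbf : breg f f' xp x = f xp - f x - ⟪f' x, xp - x⟫ := rfl
  have h1 : f xp ≤ f x + ⟪f' x, xp - x⟫ + (1/τ) * breg φ φ' xp x := by
    rw [hbf] at hsm; linarith
  have h2 : (⟪f' x, xp - x⟫ : ℝ) = -(breg φ φ' x xp + breg φ φ' xp x) / τ := by
    field_simp at hkey ⊢; linarith
  rw [h2] at h1
  rw [div_eq_mul_inv, div_eq_mul_inv] at *
  have hτi : (0:ℝ) < τ⁻¹ := inv_pos.2 hτ0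
  nlinarith [h1]
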